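/- (Non-uniform Ray-Chaudhuri–Wilson theorem.) Let n, m, s be natural numbers, L a set of s natural numbers, and A₁, …, A_m pairwise distinct subsets of an n-element set such that the family is L-intersecting, i.e., for all i ≠ j the cardinality of Aᵢ ∩ Aⱼ belongs to L. Then m ≤ ∑_{i=0}^{s} C(n, i), where C(n, i) is the binomial coefficient n choose i. -/

import Mathlib

open Finset

noncomputable def eT {n : ℕ} (T : Finset (Fin n)) : Finset (Fin n) → ℝ :=
  fun S => if T ⊆ S then 1 else 0

lemma mul_mem_span {n : ℕ} (B : Finset (Fin n)) (c : ℝ) (d : ℕ)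
    (f : Finset (Fin n) → ℝ)
    (hf : f ∈ Submodule.span ℝ (eT '' {T : Finset (Fin n) | T.card ≤ d})) :
    (fun S => (((S ∩ B).card : ℝ) - c) * f S) ∈
      Submodule.span ℝ (eT '' {T : Finset (Fin n) | T.card ≤ d + 1}) := by
  induction hf using Submodule.span_induction with
  | mem x hx =>
    obtain ⟨T, hT, rfl⟩ := hx
    have key : (fun S => (((S ∩ B).card : ℝ) - c) * eT T S)
        = (∑ k ∈ B, eT (insert k T)) - c • eT T := by
      funext S
      have h1 : ∀ k, eT (insert k T) S = (if k ∈ S then (1:ℝ) else 0) * eT T S := by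
        intro k
        simp only [eT, insert_subset_iff]
        by_cases hk : k ∈ S <;> by_cases hT' : T ⊆ S <;> simp [hk, hT']
      have h2 : (∑ k ∈ B, eT (insert k T)) S = ((S ∩ B).card : ℝ) * eT T S := by
        rw [Finset.sum_apply]
        simp_rw [h1, ← Finset.sum_mul, Finset.sum_boole, Finset.filter_mem_eq_inter,
          Finset.inter_comm]
      simp only [Pi.sub_apply, Pi.smul_apply, smul_eq_mul, h2]
      ring
    rw [key]
    refine Submodule.sub_mem _ (Submodule.sum_mem _ fun k _ => ?_)
      (Submodule.smul_mem _ _ (Submodule.subset_span ⟨T, Nat.le_succ_of_le hT, rfl⟩))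
    exact Submodule.subset_span
      ⟨insert k T, (Finset.card_insert_le _ _).trans (Nat.succ_le_succ hT), rfl⟩
  | zero =>
    have : (fun S : Finset (Fin n) => (((S ∩ B).card : ℝ) - c) * (0 : Finset (Fin n) → ℝ) S)
        = 0 := by funext S; simp
    rw [this]; exact Submodule.zero_mem _
  | add x y hx hy ihx ihy =>
    have : (fun S => (((S ∩ B).card : ℝ) - c) * (x + y) S)
        = (fun S => (((S ∩ B).card : ℝ) - c) * x S)
          + (fun S => (((S ∩ B).card : ℝ) - c) * y S) := by
      funext S; simp [mul_add]
    rw [this]; exact Submodule.add_mem _ ihx ihy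
  | smul a x hx ih =>
    have : (fun S => (((S ∩ B).card : ℝ) - c) * (a • x) S)
        = a • fun S => (((S ∩ B).card : ℝ) - c) * x S := by
      funext S; simp [smul_eq_mul]; ring
    rw [this]; exact Submodule.smul_mem _ _ ih

lemma prod_mem_span {n : ℕ} (B : Finset (Fin n)) (M : Finset ℕ) :
    (fun S : Finset (Fin n) => ∏ l ∈ M, (((S ∩ B).card : ℝ) - l)) ∈
      Submodule.span ℝ (eT '' {T : Finset (Fin n) | T.card ≤ M.card}) := by
  induction M using Finset.induction with
  | empty =>
    have : (fun _ : Finset (Fin n) => (1:ℝ)) = eT (∅ : Finset (Fin n)) := by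
      funext S; simp [eT]
    rw [show (fun S : Finset (Fin n) => ∏ l ∈ (∅ : Finset ℕ), (((S ∩ B).card : ℝ) - l))
      = eT (∅ : Finset (Fin n)) by funext S; simp [eT]]
    exact Submodule.subset_span (Set.mem_image_of_mem _ (by simp))
  | @insert a M ha ih =>
    have key : (fun S : Finset (Fin n) => ∏ l ∈ insert a M, (((S ∩ B).card : ℝ) - l))
        = fun S => (((S ∩ B).card : ℝ) - a) * ∏ l ∈ M, (((S ∩ B).card : ℝ) - l) := by
      funext S; rw [Finset.prod_insert ha]
    rw [key, Finset.card_insert_of_notMem ha]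
    exact mul_mem_span B a M.card _ ih

/-- Non-uniform Ray-Chaudhuri–Wilson theorem: if `A₁, …, A_m` are pairwise distinct
subsets of an `n`-element set forming an `L`-intersecting family with `|L| = s`, then
`m ≤ ∑_{i=0}^{s} C(n, i)`. -/
theorem ray_chaudhuri_wilson (n m s : ℕ) (L : Finset ℕ) (hL : L.card = s)
    (A : Fin m → Finset (Fin n)) (hA : Function.Injective A)
    (hint : ∀ i j : Fin m, i ≠ j → (A i ∩ A j).card ∈ L) :
    m ≤ ∑ i ∈ Finset.range (s + 1), Nat.choose n i := by
  classical
  set f : Fin m → (Finset (Fin n) → ℝ) :=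
    fun i S => ∏ l ∈ L.filter (· < (A i).card), (((S ∩ A i).card : ℝ) - l) with hfdef
  set 𝒯 : Finset (Finset (Fin n)) := Finset.univ.filter (fun T => T.card ≤ s) with h𝒯
  have hset : eT '' {T : Finset (Fin n) | T.card ≤ s} = ↑(𝒯.image eT) := by
    ext x; simp [h𝒯]
  have hmem : ∀ i, f i ∈ Submodule.span ℝ ((𝒯.image eT : Finset _) : Set _) := by
    intro i
    rw [← hset]
    refine Submodule.span_mono (Set.image_mono fun T hT => ?_)
      (prod_mem_span (A i) (L.filter (· < (A i).card)))
    exact hT.trans ((Finset.card_filter_le _ _).trans hL.le)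
  -- linear independence
  have hind : LinearIndependent ℝ f := by
    rw [Fintype.linearIndependent_iff]
    intro g hg
    by_contra hne
    push_neg at hne
    obtain ⟨i0, hi0⟩ := hne
    have hsupp : (Finset.univ.filter (fun i => g i ≠ 0)).Nonempty :=
      ⟨i0, by simp [hi0]⟩
    obtain ⟨i, hi, hmin⟩ := Finset.exists_min_image _ (fun i => (A i).card) hsupp
    have hgi : g i ≠ 0 := (Finset.mem_filter.mp hi).2
    have hev : ∑ j, g j * f j (A i) = 0 := by
      have := congrFun hg (A i)
      simpa [Finset.sum_apply] using this
    have hone : ∑ j, g j * f j (A i) = g i * f i (A i) := by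
      refine Finset.sum_eq_single i (fun j _ hj => ?_) (by simp)
      by_cases hgj : g j = 0
      · simp [hgj]
      · have hjlt : (A i).card ≤ (A j).card :=
          hmin j (Finset.mem_filter.mpr ⟨Finset.mem_univ _, hgj⟩)
        have hcL : (A i ∩ A j).card ∈ L := hint i j (Ne.symm hj)
        have hle1 : (A i ∩ A j).card ≤ (A i).card :=
          Finset.card_le_card Finset.inter_subset_left
        have hlt : (A i ∩ A j).card < (A j).card := by
          rcases lt_or_eq_of_le (hle1.trans hjlt) with h | h
          · exact h
          · exfalso
            have h1 : A i ∩ A j = A i :=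
              Finset.eq_of_subset_of_card_le Finset.inter_subset_left (by omega)
            have h2 : A i ∩ A j = A j :=
              Finset.eq_of_subset_of_card_le Finset.inter_subset_right (by omega)
            exact hj (hA (h1.symm.trans h2)).symm
        have : f j (A i) = 0 := by
          refine Finset.prod_eq_zero (Finset.mem_filter.mpr ⟨hcL, hlt⟩) ?_
          simp
        simp [this]
    have hfine : f i (A i) ≠ 0 := by
      have : (0:ℝ) < ∏ l ∈ L.filter (· < (A i).card), (((A i ∩ A i).card : ℝ) - l) := by
        refine Finset.prod_pos fun l hl => ?_
        have := (Finset.mem_filter.mp hl).2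
        rw [Finset.inter_self]
        have : (l : ℝ) < ((A i).card : ℝ) := by exact_mod_cast this
        linarith
      exact ne_of_gt this
    rw [hone] at hev
    exact hgi (by
      rcases mul_eq_zero.mp hev with h | h
      · exact h
      · exact absurd h hfine)
  -- restrict to the span
  set W := Submodule.span ℝ
    ((𝒯.image eT : Finset (Finset (Fin n) → ℝ)) : Set (Finset (Fin n) → ℝ)) with hW
  have hind' : LinearIndependent ℝ (fun i => (⟨f i, hmem i⟩ : W)) := by
    apply LinearIndependent.of_comp W.subtype
    convert hind
    rfl
  have h1 : m ≤ Module.finrank ℝ W := by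
    simpa using hind'.fintype_card_le_finrank
  have h2 : Module.finrank ℝ W ≤ (𝒯.image eT).card :=
    finrank_span_finset_le_card _
  have h3 : (𝒯.image eT).card ≤ 𝒯.card := Finset.card_image_le
  have h4 : 𝒯.card = ∑ i ∈ Finset.range (s + 1), Nat.choose n i := by
    have : 𝒯 = (Finset.range (s + 1)).biUnion
        (fun i => Finset.powersetCard i (Finset.univ : Finset (Fin n))) := by
      ext T
      simp only [h𝒯, Finset.mem_filter, Finset.mem_univ, true_and, Finset.mem_biUnion,
        Finset.mem_range, Finset.mem_powersetCard]
      constructor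
      · intro h; exact ⟨T.card, by omega, Finset.subset_univ _, rfl⟩
      · rintro ⟨i, hi, -, rfl⟩; omega
    rw [this, Finset.card_biUnion]
    · refine Finset.sum_congr rfl fun i _ => ?_
      rw [Finset.card_powersetCard, Finset.card_univ, Fintype.card_fin]
    · intro a _ b _ hab
      simp only [Finset.disjoint_left, Finset.mem_powersetCard]
      rintro T ⟨-, rfl⟩ ⟨-, h⟩
      exact hab h
  omega
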